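/- Let n > 1 and d > 1 be given. Then there exists λ_{d,n} > 0 and a packing of n unit balls in E^d with centers ĉ_1, …, ĉ_n which has the largest contact number among all packings of n unit balls in E^d (i.e., for every packing c_1, …, c_n of n unit balls in E^d, the number of pairs j < k with ‖c_j − c_k‖ = 2 is at most the number of pairs j < k with ‖ĉ_j − ĉ_k‖ = 2), such that for every λ with 0 < λ < λ_{d,n} and every packing c_1, …, c_n of n unit balls in E^d, one has vol_d(⋃_{i=1}^n (c_i + (1+λ)B^d)) ≥ vol_d(⋃_{i=1}^n (ĉ_i + (1+λ)B^d)). -/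

import Mathlib

open MeasureTheory Metric Finset
open scoped RealInnerProductSpace ENNReal
set_option maxHeartbeats 1000000
/-- The contact number of a packing with centers `c`: the number of pairs `j < k` with
`‖c j - c k‖ = 2`. -/
noncomputable def contactNumber {d n : ℕ} (c : Fin n → EuclideanSpace ℝ (Fin d)) : ℕ :=
  {p : Fin n × Fin n | p.1 < p.2 ∧ ‖c p.1 - c p.2‖ = 2}.ncard

noncomputable section
namespace BezdekAux
variable {d : ℕ}

noncomputable def e1 (d : ℕ) : EuclideanSpace ℝ (Fin d) :=
  if h : 0 < d then EuclideanSpace.single (⟨0, h⟩ : Fin d) 1 else 0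

lemma norm_e1 (h : 0 < d) : ‖e1 d‖ = 1 := by
  rw [e1, dif_pos h, EuclideanSpace.norm_single, norm_one]

def cap (d : ℕ) (t r : ℝ) : Set (EuclideanSpace ℝ (Fin d)) :=
  {y | ‖y‖ ≤ r ∧ t / 2 ≤ ⟪y, e1 d⟫}

lemma isClosed_cap (d : ℕ) (t r : ℝ) : IsClosed (cap d t r) := by
  apply IsClosed.inter
  · exact isClosed_le continuous_norm continuous_const
  · have : Continuous (fun y : EuclideanSpace ℝ (Fin d) => ⟪y, e1 d⟫) :=
      Continuous.inner continuous_id continuous_const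
    exact isClosed_le continuous_const this

lemma cap_mono {t t' r : ℝ} (h : t ≤ t') : cap d t' r ⊆ cap d t r :=
  fun y hy => ⟨hy.1, le_trans (by linarith) hy.2⟩

lemma cap_empty {t r : ℝ} (h : 2 * r < t) : cap d t r = ∅ := by
  ext y
  simp only [cap, Set.mem_setOf_eq, Set.mem_empty_iff_false, iff_false, not_and, not_le]
  intro hy
  calc ⟪y, e1 d⟫ ≤ ‖y‖ * ‖e1 d‖ := real_inner_le_norm _ _
    _ ≤ r * 1 := by
        by_cases hd : 0 < d
        · rw [norm_e1 hd]; exact mul_le_mul_of_nonneg_right hy zero_le_one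
        · simp [e1, dif_neg hd]; nlinarith [norm_nonneg y]
    _ < t / 2 := by linarith

/-- measure of an affine hyperplane is zero -/
lemma volume_hyperplane (a w : EuclideanSpace ℝ (Fin d)) (hw : w ≠ 0) (s : ℝ) :
    volume {x : EuclideanSpace ℝ (Fin d) | ⟪x - a, w⟫ = s} = 0 := by
  set K := LinearMap.ker (innerSL ℝ w : EuclideanSpace ℝ (Fin d) →ₗ[ℝ] ℝ) with hK
  have hKt : K ≠ ⊤ := by
    intro h
    have : w ∈ K := h ▸ Submodule.mem_top
    rw [hK, LinearMap.mem_ker] at this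
    simp only [ContinuousLinearMap.coe_coe, innerSL_apply_apply] at this
    exact hw (inner_self_eq_zero.mp this)
  set x₀ : EuclideanSpace ℝ (Fin d) := a + (s / ‖w‖ ^ 2) • w with hx₀
  have hset : {x : EuclideanSpace ℝ (Fin d) | ⟪x - a, w⟫ = s}
      = (fun x => x + (-x₀)) ⁻¹' (K : Set (EuclideanSpace ℝ (Fin d))) := by
    ext x
    simp only [Set.mem_setOf_eq, Set.mem_preimage, SetLike.mem_coe, hK, LinearMap.mem_ker,
      ContinuousLinearMap.coe_coe, innerSL_apply_apply]
    have hw2 : ‖w‖ ^ 2 ≠ 0 := pow_ne_zero _ (norm_ne_zero_iff.mpr hw)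
    have heq : x + -x₀ = (x - a) - (s / ‖w‖ ^ 2) • w := by rw [hx₀]; abel
    have hkey : ⟪w, x + -x₀⟫ = ⟪x - a, w⟫ - s := by
      rw [heq, real_inner_comm, inner_sub_left, real_inner_smul_left,
        real_inner_self_eq_norm_sq]
      field_simp
    rw [hkey]
    constructor
    · intro h; rw [h]; ring
    · intro h; linarith
  rw [hset, measure_preimage_add_right]
  exact Measure.addHaar_submodule volume K hKt

lemma lens_eq (hd : 0 < d) {a b : EuclideanSpace ℝ (Fin d)} (hab : a ≠ b) (r : ℝ) :
    volume (closedBall a r ∩ closedBall b r) = 2 * volume (cap d (dist a b) r) := by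
  set w : EuclideanSpace ℝ (Fin d) := b - a with hwdef
  have hw : w ≠ 0 := sub_ne_zero.mpr (Ne.symm hab)
  have hwn : 0 < ‖w‖ := norm_pos_iff.mpr hw
  have htw : dist a b = ‖w‖ := by rw [dist_eq_norm, hwdef, ← norm_neg]; congr 1; abel
  set s : ℝ := ‖w‖ ^ 2 / 2 with hs
  set C : Set (EuclideanSpace ℝ (Fin d)) :=
    {x | x ∈ closedBall a r ∧ s ≤ ⟪x - a, w⟫} with hC
  set D : Set (EuclideanSpace ℝ (Fin d)) :=
    {x | x ∈ closedBall b r ∧ ⟪x - a, w⟫ ≤ s} with hD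
  -- C and D are measurable (closed)
  have hmC : MeasurableSet C := by
    apply IsClosed.measurableSet
    apply IsClosed.inter Metric.isClosed_closedBall
    have : Continuous (fun x : EuclideanSpace ℝ (Fin d) => ⟪x - a, w⟫) :=
      Continuous.inner (continuous_id.sub continuous_const) continuous_const
    exact isClosed_le continuous_const this
  have hmD : MeasurableSet D := by
    apply IsClosed.measurableSet
    apply IsClosed.inter Metric.isClosed_closedBall
    have : Continuous (fun x : EuclideanSpace ℝ (Fin d) => ⟪x - a, w⟫) :=
      Continuous.inner (continuous_id.sub continuous_const) continuous_const
    exact isClosed_le this continuous_const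
  -- the intersection of the two balls is C ∪ D
  have hunion : closedBall a r ∩ closedBall b r = C ∪ D := by
    ext x
    simp only [Set.mem_inter_iff, Set.mem_union, hC, hD, Set.mem_setOf_eq, mem_closedBall]
    have hxb : dist x b ^ 2 = dist x a ^ 2 - 2 * ⟪x - a, w⟫ + ‖w‖ ^ 2 := by
      have h1 : x - b = (x - a) - w := by rw [hwdef]; abel
      rw [dist_eq_norm, dist_eq_norm, h1, ← real_inner_self_eq_norm_sq,
        ← real_inner_self_eq_norm_sq (x - a), ← real_inner_self_eq_norm_sq w,
        inner_sub_sub_self, real_inner_comm w (x - a)]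
      ring
    constructor
    · rintro ⟨h1, h2⟩
      rcases le_total s ⟪x - a, w⟫ with h | h
      · exact Or.inl ⟨h1, h⟩
      · exact Or.inr ⟨h2, h⟩
    · rintro (⟨h1, h2⟩ | ⟨h1, h2⟩)
      · refine ⟨h1, ?_⟩
        have hr : 0 ≤ r := le_trans dist_nonneg h1
        have : dist x b ^ 2 ≤ r ^ 2 := by
          rw [hxb]
          have : dist x a ^ 2 ≤ r ^ 2 := by nlinarith [dist_nonneg (x := x) (y := a)]
          rw [hs] at h2; nlinarith
        nlinarith [dist_nonneg (x := x) (y := b)]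
      · refine ⟨?_, h1⟩
        have hr : 0 ≤ r := le_trans dist_nonneg h1
        have : dist x a ^ 2 ≤ r ^ 2 := by
          have hxb' : dist x a ^ 2 = dist x b ^ 2 + 2 * ⟪x - a, w⟫ - ‖w‖ ^ 2 := by
            rw [hxb]; ring
          rw [hxb']
          have : dist x b ^ 2 ≤ r ^ 2 := by nlinarith [dist_nonneg (x := x) (y := b)]
          rw [hs] at h2; nlinarith
        nlinarith [dist_nonneg (x := x) (y := a)]
  -- C ∩ D is null
  have hCD : volume (C ∩ D) = 0 := by
    have hsub : C ∩ D ⊆ {x : EuclideanSpace ℝ (Fin d) | ⟪x - a, w⟫ = s} := by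
      rintro x ⟨⟨_, h1⟩, ⟨_, h2⟩⟩
      exact le_antisymm h2 h1
    exact measure_mono_null hsub (volume_hyperplane a w hw s)
  -- volume of union
  have hvol : volume (closedBall a r ∩ closedBall b r) = volume C + volume D := by
    rw [hunion, ← measure_union_add_inter C hmD, hCD, add_zero]
  -- D is the image of C under the point reflection x ↦ a + b - x
  have hDC : volume D = volume C := by
    have hmp : MeasurePreserving (fun x : EuclideanSpace ℝ (Fin d) => (a + b) - x)
        volume volume := by
      have h1 : (fun x : EuclideanSpace ℝ (Fin d) => (a + b) - x)
          = (fun x : EuclideanSpace ℝ (Fin d) => (a + b) + x) ∘ (fun x => -x) := by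
        funext x; simp [sub_eq_add_neg]
      rw [h1]
      exact (measurePreserving_add_left volume (a + b)).comp
        (Measure.measurePreserving_neg volume)
    have hpre : D = (fun x : EuclideanSpace ℝ (Fin d) => (a + b) - x) ⁻¹' C := by
      ext x
      simp only [hC, hD, Set.mem_preimage, Set.mem_setOf_eq, mem_closedBall]
      have h1 : (a + b) - x - a = b - x := by abel
      have h2 : dist ((a + b) - x) a = dist x b := by
        rw [dist_eq_norm, dist_eq_norm]
        have : (a + b) - x - a = -(x - b) := by abel
        rw [this, norm_neg]
      have h3 : ⟪(a + b) - x - a, w⟫ = ‖w‖ ^ 2 - ⟪x - a, w⟫ := by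
        rw [h1]
        have : b - x = w - (x - a) := by rw [hwdef]; abel
        rw [this, inner_sub_left, real_inner_self_eq_norm_sq]
      rw [h2, h3]
      constructor
      · rintro ⟨u, v⟩; exact ⟨u, by rw [hs] at *; linarith⟩
      · rintro ⟨u, v⟩; exact ⟨u, by rw [hs] at *; linarith⟩
    rw [hpre, hmp.measure_preimage hmC.nullMeasurableSet]
  -- volume C = volume of the canonical cap
  have hCcap : volume C = volume (cap d (dist a b) r) := by
    -- first translate by a
    set capW : Set (EuclideanSpace ℝ (Fin d)) := {y | ‖y‖ ≤ r ∧ s ≤ ⟪y, w⟫} with hcapW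
    have htr : C = (fun x : EuclideanSpace ℝ (Fin d) => x + (-a)) ⁻¹' capW := by
      ext x
      simp only [hC, hcapW, Set.mem_preimage, Set.mem_setOf_eq, mem_closedBall, dist_eq_norm]
      rw [sub_eq_add_neg]
    have h1 : volume C = volume capW := by rw [htr, measure_preimage_add_right]
    -- then rotate w/‖w‖ to e1
    set u : EuclideanSpace ℝ (Fin d) := ‖w‖⁻¹ • w with hu
    have hun : ‖u‖ = 1 := by
      rw [hu, norm_smul, norm_inv, norm_norm, inv_mul_cancel₀ (ne_of_gt hwn)]
    set f := Submodule.reflection (ℝ ∙ (u - e1 d))ᗮ with hf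
    have hfu : f u = e1 d := Submodule.reflection_sub (by rw [hun, norm_e1 hd])
    have hrot : capW = f ⁻¹' (cap d (dist a b) r) := by
      ext y
      simp only [hcapW, cap, Set.mem_preimage, Set.mem_setOf_eq, f.norm_map]
      have hfy : ⟪f y, e1 d⟫ = ⟪y, u⟫ := by
        rw [← hfu, LinearIsometryEquiv.inner_map_map]
      rw [hfy, hu, real_inner_smul_right, htw, hs]
      have hiff : ‖w‖ ^ 2 / 2 ≤ ⟪y, w⟫ ↔ ‖w‖ / 2 ≤ ‖w‖⁻¹ * ⟪y, w⟫ := by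
        rw [le_inv_mul_iff₀ hwn]
        constructor <;> intro h <;> nlinarith
      rw [hiff]
    rw [h1, hrot, f.measurePreserving.measure_preimage
      (isClosed_cap d (dist a b) r).measurableSet.nullMeasurableSet]
  rw [hvol, hDC, hCcap, two_mul]


lemma triple_empty {a b c : EuclideanSpace ℝ (Fin d)} {r : ℝ}
    (h1 : 2 ≤ dist a b) (h2 : 2 ≤ dist b c) (h3 : 2 ≤ dist a c) (hr : r ^ 2 < 4 / 3) :
    closedBall a r ∩ closedBall b r ∩ closedBall c r = ∅ := by
  ext x
  simp only [Set.mem_inter_iff, mem_closedBall, Set.mem_empty_iff_false, iff_false, not_and]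
  intro hxab hxc
  obtain ⟨hxa, hxb⟩ := hxab
  have hru : ‖a - x‖ ^ 2 ≤ r ^ 2 := by
    rw [← dist_eq_norm, dist_comm]; exact pow_le_pow_left₀ dist_nonneg hxa 2
  have hrv : ‖b - x‖ ^ 2 ≤ r ^ 2 := by
    rw [← dist_eq_norm, dist_comm]; exact pow_le_pow_left₀ dist_nonneg hxb 2
  have hrw : ‖c - x‖ ^ 2 ≤ r ^ 2 := by
    rw [← dist_eq_norm, dist_comm]; exact pow_le_pow_left₀ dist_nonneg hxc 2
  have hab : (4:ℝ) ≤ ‖a - x‖ ^ 2 - 2 * ⟪a - x, b - x⟫ + ‖b - x‖ ^ 2 := by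
    have h : dist a b = ‖(a - x) - (b - x)‖ := by rw [dist_eq_norm]; congr 1; abel
    have := pow_le_pow_left₀ (by norm_num : (0:ℝ) ≤ 2) h1 2
    rw [h, norm_sub_sq_real] at this; linarith
  have hbc : (4:ℝ) ≤ ‖b - x‖ ^ 2 - 2 * ⟪b - x, c - x⟫ + ‖c - x‖ ^ 2 := by
    have h : dist b c = ‖(b - x) - (c - x)‖ := by rw [dist_eq_norm]; congr 1; abel
    have := pow_le_pow_left₀ (by norm_num : (0:ℝ) ≤ 2) h2 2
    rw [h, norm_sub_sq_real] at this; linarith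
  have hac : (4:ℝ) ≤ ‖a - x‖ ^ 2 - 2 * ⟪a - x, c - x⟫ + ‖c - x‖ ^ 2 := by
    have h : dist a c = ‖(a - x) - (c - x)‖ := by rw [dist_eq_norm]; congr 1; abel
    have := pow_le_pow_left₀ (by norm_num : (0:ℝ) ≤ 2) h3 2
    rw [h, norm_sub_sq_real] at this; linarith
  have hsum : (0:ℝ) ≤ ‖a - x‖ ^ 2 + ‖b - x‖ ^ 2 + ‖c - x‖ ^ 2
      + 2 * (⟪a - x, b - x⟫ + ⟪a - x, c - x⟫ + ⟪b - x, c - x⟫) := by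
    have h0 : (0:ℝ) ≤ ‖(a - x) + (b - x) + (c - x)‖ ^ 2 := sq_nonneg _
    have h1' : ‖(a - x) + (b - x) + (c - x)‖ ^ 2
        = ‖(a - x) + (b - x)‖ ^ 2 + 2 * ⟪(a - x) + (b - x), c - x⟫ + ‖c - x‖ ^ 2 :=
      norm_add_sq_real ((a - x) + (b - x)) (c - x)
    have h2' : ‖(a - x) + (b - x)‖ ^ 2 = ‖a - x‖ ^ 2 + 2 * ⟪a - x, b - x⟫ + ‖b - x‖ ^ 2 :=
      norm_add_sq_real (a - x) (b - x)
    have h3' : ⟪(a - x) + (b - x), c - x⟫ = ⟪a - x, c - x⟫ + ⟪b - x, c - x⟫ :=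
      inner_add_left (a - x) (b - x) (c - x)
    rw [h1', h2', h3'] at h0; linarith
  linarith

lemma incl_excl {n : ℕ} (A : Fin n → Set (EuclideanSpace ℝ (Fin d)))
    (hm : ∀ i, MeasurableSet (A i))
    (htrip : ∀ i j k : Fin n, i ≠ j → i ≠ k → j ≠ k → A i ∩ A j ∩ A k = ∅)
    (s : Finset (Fin n)) :
    volume (⋃ i ∈ s, A i)
        + ∑ i ∈ s, ∑ j ∈ s, (if i < j then volume (A i ∩ A j) else 0)
      = ∑ i ∈ s, volume (A i) := by
  induction s using Finset.induction_on_max with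
  | empty => simp
  | insert a s ha ih =>
    have has : a ∉ s := fun h => lt_irrefl a (ha a h)
    have hU : ⋃ i ∈ insert a s, A i = A a ∪ ⋃ i ∈ s, A i := Finset.set_biUnion_insert a s A
    have hinter : volume (A a ∩ ⋃ i ∈ s, A i) = ∑ i ∈ s, volume (A a ∩ A i) := by
      rw [Set.inter_iUnion₂]
      refine measure_biUnion_finset ?_ (fun i _ => (hm a).inter (hm i))
      intro i hi j hj hij
      refine Set.disjoint_left.mpr fun x hx1 hx2 => ?_
      have hia : i ≠ a := fun h => lt_irrefl a (h ▸ ha i hi)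
      have hja : j ≠ a := fun h => lt_irrefl a (h ▸ ha j hj)
      have := htrip i j a hij hia hja
      have hx : x ∈ A i ∩ A j ∩ A a := ⟨⟨hx1.2, hx2.2⟩, hx1.1⟩
      rw [this] at hx; exact hx
    have hsum : ∑ i ∈ insert a s, ∑ j ∈ insert a s,
        (if i < j then volume (A i ∩ A j) else 0)
        = ∑ i ∈ s, volume (A a ∩ A i)
          + ∑ i ∈ s, ∑ j ∈ s, (if i < j then volume (A i ∩ A j) else 0) := by
      rw [Finset.sum_insert has]
      have h1 : ∑ j ∈ insert a s, (if a < j then volume (A a ∩ A j) else 0) = 0 := by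
        rw [Finset.sum_insert has, if_neg (lt_irrefl a), zero_add]
        refine Finset.sum_eq_zero fun j hj => if_neg (fun h : a < j => lt_irrefl a (lt_trans h (ha j hj)))
      rw [h1, zero_add]
      have h2 : ∀ i ∈ s, ∑ j ∈ insert a s, (if i < j then volume (A i ∩ A j) else 0)
          = volume (A a ∩ A i) + ∑ j ∈ s, (if i < j then volume (A i ∩ A j) else 0) := by
        intro i hi
        rw [Finset.sum_insert has, if_pos (ha i hi), Set.inter_comm]
      rw [Finset.sum_congr rfl h2, Finset.sum_add_distrib]
    rw [hU, hsum, Finset.sum_insert has, ← ih]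
    have := measure_union_add_inter' (μ := (volume : Measure (EuclideanSpace ℝ (Fin d))))
      (hm a) (⋃ i ∈ s, A i)
    calc volume (A a ∪ ⋃ i ∈ s, A i) + (∑ i ∈ s, volume (A a ∩ A i)
            + ∑ i ∈ s, ∑ j ∈ s, (if i < j then volume (A i ∩ A j) else 0))
        = (volume (A a ∪ ⋃ i ∈ s, A i) + volume (A a ∩ ⋃ i ∈ s, A i))
            + ∑ i ∈ s, ∑ j ∈ s, (if i < j then volume (A i ∩ A j) else 0) := by
          rw [hinter]; ring
      _ = (volume (A a) + volume (⋃ i ∈ s, A i))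
            + ∑ i ∈ s, ∑ j ∈ s, (if i < j then volume (A i ∩ A j) else 0) := by rw [this]
      _ = volume (A a) + (volume (⋃ i ∈ s, A i)
            + ∑ i ∈ s, ∑ j ∈ s, (if i < j then volume (A i ∩ A j) else 0)) := by ring

lemma one_le_abs_cast_sub {a b : ℕ} (h : a ≠ b) : (1:ℝ) ≤ |(a:ℝ) - b| := by
  rcases Nat.lt_or_ge a b with h' | h'
  · have : (a:ℝ) + 1 ≤ b := by exact_mod_cast Nat.succ_le_of_lt h'
    exact le_abs.mpr (Or.inr (by linarith))
  · have h'' : b < a := lt_of_le_of_ne h' (Ne.symm h)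
    have : (b:ℝ) + 1 ≤ a := by exact_mod_cast Nat.succ_le_of_lt h''
    exact le_abs.mpr (Or.inl (by linarith))

lemma normalize {n : ℕ} (hd : 0 < d) (c : Fin n → EuclideanSpace ℝ (Fin d))
    (hc : ∀ j k, j ≠ k → 2 ≤ dist (c j) (c k)) :
    ∃ c' : Fin n → EuclideanSpace ℝ (Fin d),
      (∀ j k, j ≠ k → 2 ≤ dist (c' j) (c' k)) ∧
      (∀ i, ‖c' i‖ ≤ 33 * (n:ℝ) ^ 2) ∧
      (∀ j k, dist (c j) (c k) ≤ 3 → dist (c' j) (c' k) = dist (c j) (c k)) := by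
  classical
  rcases Nat.eq_zero_or_pos n with rfl | hn
  · exact ⟨c, hc, fun i => i.elim0, fun j k _ => rfl⟩
  have hn1 : (1:ℝ) ≤ n := by exact_mod_cast hn
  set G : SimpleGraph (Fin n) :=
    { Adj := fun j k => j ≠ k ∧ dist (c j) (c k) ≤ 3,
      symm := ⟨by intro a b hab; exact ⟨hab.1.symm, by rw [dist_comm]; exact hab.2⟩⟩,
      loopless := ⟨fun a ha => ha.1 rfl⟩ } with hG
  have hwalk : ∀ (j k : Fin n) (w : G.Walk j k), dist (c j) (c k) ≤ 3 * w.length := by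
    intro j k w
    induction w with
    | nil => simp
    | cons h p ih =>
      rename_i x y z
      calc dist (c x) (c z) ≤ dist (c x) (c y) + dist (c y) (c z) := dist_triangle _ _ _
        _ ≤ 3 + 3 * p.length := add_le_add h.2 ih
        _ = 3 * ((p.length + 1 : ℕ) : ℝ) := by push_cast; ring
        _ = 3 * ((SimpleGraph.Walk.cons h p).length : ℝ) := by
            rw [SimpleGraph.Walk.length_cons]
  have hreach : ∀ j k, G.Reachable j k → dist (c j) (c k) ≤ 3 * n := by
    intro j k h
    obtain ⟨w⟩ := h
    have hp := w.bypass_isPath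
    have hl : w.bypass.length < n := by
      have := hp.length_lt
      simpa using this
    calc dist (c j) (c k) ≤ 3 * w.bypass.length := hwalk j k w.bypass
      _ ≤ 3 * n := by
          have : (w.bypass.length : ℝ) ≤ n := by exact_mod_cast hl.le
          linarith
  have hne : ∀ i : Fin n, (univ.filter (fun j => G.Reachable i j)).Nonempty :=
    fun i => ⟨i, by
      simp only [Finset.mem_filter, Finset.mem_univ, true_and]
      exact SimpleGraph.Reachable.refl i⟩
  set rep : Fin n → Fin n := fun i => (univ.filter (fun j => G.Reachable i j)).min' (hne i)
    with hrepdef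
  have hrep1 : ∀ i, G.Reachable i (rep i) := by
    intro i
    have := Finset.min'_mem (univ.filter (fun j => G.Reachable i j)) (hne i)
    exact (Finset.mem_filter.mp this).2
  have hrep2 : ∀ i j, G.Reachable i j → rep i = rep j := by
    intro i j h
    have : (univ.filter (fun k => G.Reachable i k)) = (univ.filter (fun k => G.Reachable j k)) := by
      ext k
      simp only [Finset.mem_filter, Finset.mem_univ, true_and]
      exact ⟨fun h' => h.symm.trans h', fun h' => h.trans h'⟩
    simp only [hrepdef, this]
  have hdrep : ∀ i, dist (c i) (c (rep i)) ≤ 3 * n := fun i => hreach _ _ (hrep1 i)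
  set c' : Fin n → EuclideanSpace ℝ (Fin d) :=
    fun i => c i - c (rep i) + ((30 * (n:ℝ) * ((rep i : ℕ) : ℝ)) • e1 d) with hc'def
  have hsame : ∀ i j, rep i = rep j → c' i - c' j = c i - c j := by
    intro i j h
    simp only [hc'def]
    rw [h]
    abel
  have hdiff : ∀ i j, rep i ≠ rep j → 24 * (n:ℝ) ≤ dist (c' i) (c' j) := by
    intro i j h
    set o : EuclideanSpace ℝ (Fin d) :=
      (30 * (n:ℝ) * ((rep i : ℕ) : ℝ) - 30 * (n:ℝ) * ((rep j : ℕ) : ℝ)) • e1 d with ho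
    have hoeq : o = (c' i - c' j) - (c i - c (rep i)) + (c j - c (rep j)) := by
      simp only [hc'def, ho, sub_smul]
      abel
    have hno : 30 * (n:ℝ) ≤ ‖o‖ := by
      rw [ho, norm_smul, norm_e1 hd, mul_one]
      have : (30 * (n:ℝ) * ((rep i : ℕ) : ℝ) - 30 * (n:ℝ) * ((rep j : ℕ) : ℝ))
          = (30 * (n:ℝ)) * (((rep i : ℕ) : ℝ) - ((rep j : ℕ) : ℝ)) := by ring
      rw [this, Real.norm_eq_abs, abs_mul, abs_of_nonneg (by positivity : (0:ℝ) ≤ 30 * (n:ℝ))]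
      have h1 : (1:ℝ) ≤ |((rep i : ℕ) : ℝ) - ((rep j : ℕ) : ℝ)| :=
        one_le_abs_cast_sub (fun hh => h (Fin.val_injective hh))
      nlinarith
    have htri : ‖o‖ ≤ ‖c' i - c' j‖ + ‖c i - c (rep i)‖ + ‖c j - c (rep j)‖ := by
      rw [hoeq]
      calc ‖(c' i - c' j) - (c i - c (rep i)) + (c j - c (rep j))‖
          ≤ ‖(c' i - c' j) - (c i - c (rep i))‖ + ‖c j - c (rep j)‖ := norm_add_le _ _
        _ ≤ ‖c' i - c' j‖ + ‖c i - c (rep i)‖ + ‖c j - c (rep j)‖ := by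
            have := norm_sub_le (c' i - c' j) (c i - c (rep i))
            linarith
    have hi' : ‖c i - c (rep i)‖ ≤ 3 * n := by rw [← dist_eq_norm]; exact hdrep i
    have hj' : ‖c j - c (rep j)‖ ≤ 3 * n := by rw [← dist_eq_norm]; exact hdrep j
    rw [dist_eq_norm]
    linarith
  refine ⟨c', ?_, ?_, ?_⟩
  · intro j k hjk
    by_cases h : rep j = rep k
    · rw [dist_eq_norm, hsame j k h, ← dist_eq_norm]
      exact hc j k hjk
    · have := hdiff j k h
      linarith
  · intro i
    have h1 : ‖c' i‖ ≤ ‖c i - c (rep i)‖ + ‖(30 * (n:ℝ) * ((rep i : ℕ) : ℝ)) • e1 d‖ := by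
      simp only [hc'def]
      exact norm_add_le _ _
    have h2 : ‖c i - c (rep i)‖ ≤ 3 * n := by rw [← dist_eq_norm]; exact hdrep i
    have h3 : ‖(30 * (n:ℝ) * ((rep i : ℕ) : ℝ)) • e1 d‖ ≤ 30 * (n:ℝ) * n := by
      rw [norm_smul, norm_e1 hd, mul_one]
      have h4 : ((rep i : ℕ) : ℝ) ≤ n := by
        exact_mod_cast (rep i).is_lt.le
      rw [Real.norm_eq_abs, abs_of_nonneg (by positivity)]
      nlinarith
    calc ‖c' i‖ ≤ 3 * (n:ℝ) + 30 * n * n := by linarith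
      _ ≤ 33 * n ^ 2 := by nlinarith
  · intro j k hjk3
    by_cases hjk : j = k
    · simp [hjk]
    · have hadj : G.Adj j k := ⟨hjk, hjk3⟩
      have : rep j = rep k := hrep2 j k hadj.reachable
      rw [dist_eq_norm, hsame j k this, ← dist_eq_norm]


open scoped Classical in
/-- the finset of pairs at distance at most `2 + ε` -/
noncomputable def closePairs {n : ℕ} (ε : ℝ) (c : Fin n → EuclideanSpace ℝ (Fin d)) :
    Finset (Fin n × Fin n) :=
  (univ ×ˢ univ).filter fun p => p.1 < p.2 ∧ dist (c p.1) (c p.2) ≤ 2 + ε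

lemma mem_closePairs {n : ℕ} {ε : ℝ} {c : Fin n → EuclideanSpace ℝ (Fin d)}
    {p : Fin n × Fin n} :
    p ∈ closePairs ε c ↔ p.1 < p.2 ∧ dist (c p.1) (c p.2) ≤ 2 + ε := by
  classical
  simp [closePairs, Finset.mem_filter]

lemma exists_eps {n : ℕ} (hd : 0 < d) (K : ℕ)
    (hK : ∀ c : Fin n → EuclideanSpace ℝ (Fin d),
      (∀ j k, j ≠ k → 2 ≤ dist (c j) (c k)) → contactNumber c ≤ K) :
    ∃ ε : ℝ, 0 < ε ∧ ε ≤ 1 ∧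
      ∀ c : Fin n → EuclideanSpace ℝ (Fin d),
        (∀ j k, j ≠ k → 2 ≤ dist (c j) (c k)) → (closePairs ε c).card ≤ K := by
  classical
  by_contra hcon
  push_neg at hcon
  -- for each m, a normalized packing with more than K pairs at distance ≤ 2 + 1/(m+1)
  have hstep : ∀ m : ℕ, ∃ c : Fin n → EuclideanSpace ℝ (Fin d),
      (∀ j k, j ≠ k → 2 ≤ dist (c j) (c k)) ∧ (∀ i, ‖c i‖ ≤ 33 * (n:ℝ) ^ 2) ∧
      K < (closePairs (1 / (m + 1 : ℝ)) c).card := by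
    intro m
    have hεm : (0:ℝ) < 1 / (m + 1 : ℝ) := by positivity
    have hεm1 : (1:ℝ) / (m + 1 : ℝ) ≤ 1 := by
      rw [div_le_one (by positivity)]
      have : (0:ℝ) ≤ (m:ℝ) := Nat.cast_nonneg m
      linarith
    obtain ⟨c, hcP, hccard⟩ := hcon (1 / (m + 1 : ℝ)) hεm hεm1
    obtain ⟨c', hc'P, hc'bd, hc'dist⟩ := normalize hd c hcP
    refine ⟨c', hc'P, hc'bd, lt_of_lt_of_le hccard ?_⟩
    apply Finset.card_le_card
    intro p hp
    rw [mem_closePairs] at hp ⊢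
    refine ⟨hp.1, ?_⟩
    have h3 : dist (c p.1) (c p.2) ≤ 3 := by
      have := hp.2; linarith
    rw [hc'dist p.1 p.2 h3]
    exact hp.2
  choose cs hcsP hcsbd hcscard using hstep
  -- pigeonhole: one finset occurs infinitely often
  set g : ℕ → Finset (Fin n × Fin n) := fun m => closePairs (1 / (m + 1 : ℝ)) (cs m) with hg
  obtain ⟨P, hPinf⟩ := Finite.exists_infinite_fiber g
  have hSinf : (g ⁻¹' {P}).Infinite := Set.infinite_coe_iff.mp hPinf
  have hidx : ∀ m : ℕ, ∃ m', m' ∈ g ⁻¹' {P} ∧ m < m' := by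
    intro m
    obtain ⟨b, hb, hb'⟩ := hSinf.exists_gt m
    exact ⟨b, hb, hb'⟩
  choose idx hidxS hidxlt using hidx
  have hPcard : K < P.card := by
    have := hcscard (idx 0)
    have hP : g (idx 0) = P := hidxS 0
    rw [← hP]; exact this
  -- compactness
  set R : ℝ := 33 * (n:ℝ) ^ 2 with hR
  have hcompact : IsCompact (Set.pi Set.univ
      (fun _ : Fin n => closedBall (0 : EuclideanSpace ℝ (Fin d)) R)) :=
    isCompact_univ_pi fun _ => isCompact_closedBall 0 R
  have hmem : ∀ m : ℕ, cs (idx m) ∈ Set.pi Set.univ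
      (fun _ : Fin n => closedBall (0 : EuclideanSpace ℝ (Fin d)) R) := by
    intro m i _
    rw [mem_closedBall, dist_zero_right]
    exact hcsbd (idx m) i
  obtain ⟨chat, _, φ, hφ, hconv⟩ := hcompact.tendsto_subseq hmem
  have hcoord : ∀ i : Fin n, Filter.Tendsto (fun m => cs (idx (φ m)) i)
      Filter.atTop (nhds (chat i)) := fun i => (tendsto_pi_nhds.mp hconv) i
  have hdist : ∀ j k : Fin n, Filter.Tendsto (fun m => dist (cs (idx (φ m)) j) (cs (idx (φ m)) k))
      Filter.atTop (nhds (dist (chat j) (chat k))) :=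
    fun j k => (hcoord j).dist (hcoord k)
  have hchatP : ∀ j k, j ≠ k → 2 ≤ dist (chat j) (chat k) := by
    intro j k hjk
    exact ge_of_tendsto (hdist j k)
      (Filter.Eventually.of_forall fun m => hcsP (idx (φ m)) j k hjk)
  -- limits of close pairs are contacts
  have hcontact : ∀ p : Fin n × Fin n, p ∈ P → p.1 < p.2 ∧ dist (chat p.1) (chat p.2) = 2 := by
    intro p hp
    have hlt : p.1 < p.2 := by
      have hP0 : g (idx 0) = P := hidxS 0
      rw [← hP0, hg, mem_closePairs] at hp
      exact hp.1
    refine ⟨hlt, le_antisymm ?_ (hchatP p.1 p.2 (ne_of_lt hlt))⟩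
    have hub : ∀ m : ℕ, dist (cs (idx (φ m)) p.1) (cs (idx (φ m)) p.2)
        ≤ 2 + 1 / ((m:ℝ) + 1) := by
      intro m
      have hPm : g (idx (φ m)) = P := hidxS (φ m)
      have hp' := hp
      rw [← hPm, hg, mem_closePairs] at hp'
      have hle : dist (cs (idx (φ m)) p.1) (cs (idx (φ m)) p.2)
          ≤ 2 + 1 / ((idx (φ m) : ℝ) + 1) := hp'.2
      have hmono : (1:ℝ) / ((idx (φ m) : ℝ) + 1) ≤ 1 / ((m:ℝ) + 1) := by
        apply div_le_div_of_nonneg_left one_pos.le (by positivity)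
        have h1 : m ≤ φ m := hφ.le_apply
        have h2 : φ m < idx (φ m) := hidxlt (φ m)
        have : (m:ℝ) ≤ (idx (φ m) : ℝ) := by exact_mod_cast le_of_lt (lt_of_le_of_lt h1 h2)
        linarith
      linarith
    have hlim2 : Filter.Tendsto (fun m : ℕ => 2 + 1 / ((m:ℝ) + 1))
        Filter.atTop (nhds 2) := by
      have h0 : Filter.Tendsto (fun m : ℕ => 1 / ((m:ℝ) + 1)) Filter.atTop (nhds 0) :=
        tendsto_one_div_add_atTop_nhds_zero_nat
      have := Filter.Tendsto.const_add (2:ℝ) h0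
      simpa using this
    exact le_of_tendsto_of_tendsto' (hdist p.1 p.2) hlim2 hub
  -- contradiction with maximality
  have hfinal : K < contactNumber chat := by
    have hsub : (↑P : Set (Fin n × Fin n))
        ⊆ {p : Fin n × Fin n | p.1 < p.2 ∧ ‖chat p.1 - chat p.2‖ = 2} := by
      intro p hp
      obtain ⟨h1, h2⟩ := hcontact p hp
      exact ⟨h1, by rw [← dist_eq_norm]; exact h2⟩
    calc K < P.card := hPcard
      _ = (↑P : Set (Fin n × Fin n)).ncard := (Set.ncard_coe_finset P).symm
      _ ≤ contactNumber chat := Set.ncard_le_ncard hsub (Set.toFinite _)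
  exact absurd (hK chat hchatP) (not_le.mpr hfinal)

end BezdekAux

open BezdekAux in
/-- For `n > 1`, `d > 1`, there exist `λ_{d,n} > 0` and a packing `ĉ` of `n` unit balls in `E^d`
possessing the largest contact number, such that for all `0 < λ < λ_{d,n}` the outer parallel
domain of `ĉ` of outer radius `λ` has the smallest volume among all packings of `n` unit balls. -/
theorem exists_max_contact_packing_min_parallel_volume (d n : ℕ) (hd : 1 < d) (hn : 1 < n) :
    ∃ (lam0 : ℝ) (chat : Fin n → EuclideanSpace ℝ (Fin d)),
      0 < lam0 ∧
      (∀ j k : Fin n, j ≠ k → 2 ≤ ‖chat j - chat k‖) ∧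
      (∀ c : Fin n → EuclideanSpace ℝ (Fin d),
        (∀ j k : Fin n, j ≠ k → 2 ≤ ‖c j - c k‖) →
        contactNumber c ≤ contactNumber chat) ∧
      (∀ lam : ℝ, 0 < lam → lam < lam0 →
        ∀ c : Fin n → EuclideanSpace ℝ (Fin d),
          (∀ j k : Fin n, j ≠ k → 2 ≤ ‖c j - c k‖) →
          volume (⋃ i : Fin n, closedBall (chat i) (1 + lam)) ≤
            volume (⋃ i : Fin n, closedBall (c i) (1 + lam))) := by
  classical
  have hd0 : 0 < d := lt_trans one_pos hd
  have hnormiff : ∀ c : Fin n → EuclideanSpace ℝ (Fin d),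
      (∀ j k : Fin n, j ≠ k → 2 ≤ ‖c j - c k‖) ↔
      (∀ j k : Fin n, j ≠ k → 2 ≤ dist (c j) (c k)) := by
    intro c
    constructor
    · intro h j k hjk; rw [dist_eq_norm]; exact h j k hjk
    · intro h j k hjk; rw [← dist_eq_norm]; exact h j k hjk
  -- there exists at least one packing
  have hex : ∃ c : Fin n → EuclideanSpace ℝ (Fin d),
      ∀ j k : Fin n, j ≠ k → 2 ≤ dist (c j) (c k) := by
    refine ⟨fun i => ((4 * ((i : ℕ) : ℝ))) • e1 d, ?_⟩
    intro j k hjk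
    rw [dist_eq_norm, ← sub_smul, norm_smul, norm_e1 hd0, mul_one, Real.norm_eq_abs]
    have h1 : (1:ℝ) ≤ |((j : ℕ) : ℝ) - ((k : ℕ) : ℝ)| :=
      one_le_abs_cast_sub (fun h => hjk (Fin.val_injective h))
    have h2 : 4 * ((j : ℕ) : ℝ) - 4 * ((k : ℕ) : ℝ)
        = 4 * (((j : ℕ) : ℝ) - ((k : ℕ) : ℝ)) := by ring
    rw [h2, abs_mul, abs_of_nonneg (by norm_num : (0:ℝ) ≤ 4)]
    nlinarith
  set Ach : Set ℕ := {m | ∃ c : Fin n → EuclideanSpace ℝ (Fin d),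
    (∀ j k : Fin n, j ≠ k → 2 ≤ dist (c j) (c k)) ∧ contactNumber c = m} with hAch
  have hAne : Ach.Nonempty := ⟨contactNumber hex.choose, hex.choose, hex.choose_spec, rfl⟩
  have hAbdd : BddAbove Ach := by
    refine ⟨n * n, ?_⟩
    rintro m ⟨c, _, rfl⟩
    calc contactNumber c ≤ (Set.univ : Set (Fin n × Fin n)).ncard :=
          Set.ncard_le_ncard (Set.subset_univ _) Set.finite_univ
      _ = n * n := by rw [Set.ncard_univ]; simp [Nat.card_eq_fintype_card]
  obtain ⟨chat, hchatP, hchatK⟩ := Nat.sSup_mem hAne hAbdd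
  set K := sSup Ach with hKdef
  have hmax : ∀ c : Fin n → EuclideanSpace ℝ (Fin d),
      (∀ j k : Fin n, j ≠ k → 2 ≤ dist (c j) (c k)) → contactNumber c ≤ K :=
    fun c hc => le_csSup hAbdd ⟨c, hc, rfl⟩
  obtain ⟨ε, hε0, hε1, hεK⟩ := exists_eps hd0 K hmax
  refine ⟨min (ε / 2) (1 / 8), chat, by positivity, (hnormiff chat).mpr hchatP, ?_, ?_⟩
  · intro c hc
    rw [hchatK]
    exact hmax c ((hnormiff c).mp hc)
  · intro lam hlam0 hlamlt c hcN
    have hcP : ∀ j k : Fin n, j ≠ k → 2 ≤ dist (c j) (c k) := (hnormiff c).mp hcN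
    have hlam8 : lam < 1 / 8 := lt_of_lt_of_le hlamlt (min_le_right _ _)
    have hlamε : lam < ε / 2 := lt_of_lt_of_le hlamlt (min_le_left _ _)
    set r : ℝ := 1 + lam with hr
    have hrsq : r ^ 2 < 4 / 3 := by rw [hr]; nlinarith
    set L : ℝ≥0∞ := volume (cap d 2 r) with hL
    -- the inclusion-exclusion identity for any packing
    have key : ∀ b : Fin n → EuclideanSpace ℝ (Fin d),
        (∀ j k : Fin n, j ≠ k → 2 ≤ dist (b j) (b k)) →
        volume (⋃ i : Fin n, closedBall (b i) r)
          + ∑ i : Fin n, ∑ j : Fin n,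
              (if i < j then volume (closedBall (b i) r ∩ closedBall (b j) r) else 0)
        = (n : ℝ≥0∞) * volume (closedBall (0 : EuclideanSpace ℝ (Fin d)) r) := by
      intro b hb
      have htrip : ∀ i j k : Fin n, i ≠ j → i ≠ k → j ≠ k →
          closedBall (b i) r ∩ closedBall (b j) r ∩ closedBall (b k) r = ∅ :=
        fun i j k hij hik hjk => triple_empty (hb i j hij) (hb j k hjk) (hb i k hik) hrsq
      have hIE := incl_excl (fun i => closedBall (b i) r)
        (fun i => measurableSet_closedBall) htrip Finset.univ
      have hU : ⋃ i ∈ (Finset.univ : Finset (Fin n)), closedBall (b i) r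
          = ⋃ i : Fin n, closedBall (b i) r := by ext x; simp
      have hS : ∑ i : Fin n, volume (closedBall (b i) r)
          = (n : ℝ≥0∞) * volume (closedBall (0 : EuclideanSpace ℝ (Fin d)) r) := by
        rw [Finset.sum_congr rfl
          (fun i _ => Measure.addHaar_closedBall_center volume (b i) r)]
        rw [Finset.sum_const, Finset.card_univ, Fintype.card_fin, nsmul_eq_mul]
      rw [hU, hS] at hIE
      exact hIE
    -- upper bound for the overlap sum of an arbitrary packing
    have hTle : ∀ b : Fin n → EuclideanSpace ℝ (Fin d),
        (∀ j k : Fin n, j ≠ k → 2 ≤ dist (b j) (b k)) →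
        (∑ i : Fin n, ∑ j : Fin n,
            (if i < j then volume (closedBall (b i) r ∩ closedBall (b j) r) else 0))
          ≤ (K : ℝ≥0∞) * (2 * L) := by
      intro b hb
      have hterm : ∀ i j : Fin n,
          (if i < j then volume (closedBall (b i) r ∩ closedBall (b j) r) else 0)
          ≤ (if i < j ∧ dist (b i) (b j) ≤ 2 + ε then 2 * L else 0) := by
        intro i j
        by_cases h1 : i < j
        · have hdij : 2 ≤ dist (b i) (b j) := hb i j (ne_of_lt h1)
          have hne : b i ≠ b j := by
            intro h
            rw [h, dist_self] at hdij; linarith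
          by_cases h2 : dist (b i) (b j) ≤ 2 + ε
          · rw [if_pos h1, if_pos ⟨h1, h2⟩, lens_eq hd0 hne r]
            exact mul_le_mul_right (measure_mono (cap_mono hdij)) 2
          · rw [if_pos h1, if_neg (fun h => h2 h.2), lens_eq hd0 hne r]
            have hfar : 2 * r < dist (b i) (b j) := by
              push_neg at h2
              rw [hr]; linarith
            rw [cap_empty hfar, measure_empty, mul_zero]
        · rw [if_neg h1, if_neg (fun h => h1 h.1)]
      calc (∑ i : Fin n, ∑ j : Fin n,
            (if i < j then volume (closedBall (b i) r ∩ closedBall (b j) r) else 0))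
          ≤ ∑ i : Fin n, ∑ j : Fin n,
            (if i < j ∧ dist (b i) (b j) ≤ 2 + ε then 2 * L else 0) :=
            Finset.sum_le_sum fun i _ => Finset.sum_le_sum fun j _ => hterm i j
        _ = ∑ p ∈ (Finset.univ ×ˢ Finset.univ : Finset (Fin n × Fin n)),
            (if p.1 < p.2 ∧ dist (b p.1) (b p.2) ≤ 2 + ε then 2 * L else 0) := by
            rw [Finset.sum_product]
        _ = (closePairs ε b).card • (2 * L) := by
            have hCP : closePairs ε b = (Finset.univ ×ˢ Finset.univ).filter
                (fun p => p.1 < p.2 ∧ dist (b p.1) (b p.2) ≤ 2 + ε) := by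
              ext p
              rw [mem_closePairs, Finset.mem_filter]
              simp [Finset.mem_product]
            rw [← Finset.sum_filter, Finset.sum_const, hCP]
        _ ≤ (K : ℝ≥0∞) * (2 * L) := by
            rw [nsmul_eq_mul]
            exact mul_le_mul_left
              (by exact_mod_cast hεK b hb : ((closePairs ε b).card : ℝ≥0∞) ≤ K) _
    -- lower bound for the overlap sum of the optimal packing
    have hTge : (K : ℝ≥0∞) * (2 * L)
        ≤ ∑ i : Fin n, ∑ j : Fin n,
            (if i < j then volume (closedBall (chat i) r ∩ closedBall (chat j) r) else 0) := by
      have hterm : ∀ i j : Fin n,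
          (if i < j ∧ dist (chat i) (chat j) = 2 then 2 * L else 0)
          ≤ (if i < j then volume (closedBall (chat i) r ∩ closedBall (chat j) r) else 0) := by
        intro i j
        by_cases h1 : i < j ∧ dist (chat i) (chat j) = 2
        · have hne : chat i ≠ chat j := by
            intro h
            rw [h, dist_self] at h1
            exact two_ne_zero h1.2.symm
          rw [if_pos h1, if_pos h1.1, lens_eq hd0 hne r, h1.2]
        · rw [if_neg h1]
          exact zero_le
      have hcard : ((Finset.univ ×ˢ Finset.univ : Finset (Fin n × Fin n)).filter
          (fun p => p.1 < p.2 ∧ dist (chat p.1) (chat p.2) = 2)).card = K := by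
        rw [← hchatK, contactNumber, Set.ncard_eq_toFinset_card', Set.toFinset_setOf]
        congr 1
      calc (K : ℝ≥0∞) * (2 * L)
          = ((Finset.univ ×ˢ Finset.univ : Finset (Fin n × Fin n)).filter
              (fun p => p.1 < p.2 ∧ dist (chat p.1) (chat p.2) = 2)).card • (2 * L) := by
            rw [nsmul_eq_mul, hcard]
        _ = ∑ _p ∈ (Finset.univ ×ˢ Finset.univ : Finset (Fin n × Fin n)).filter
              (fun p => p.1 < p.2 ∧ dist (chat p.1) (chat p.2) = 2), (2 * L) :=
            (Finset.sum_const _).symm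
        _ = ∑ p ∈ (Finset.univ ×ˢ Finset.univ : Finset (Fin n × Fin n)),
            (if p.1 < p.2 ∧ dist (chat p.1) (chat p.2) = 2 then 2 * L else 0) := by
            rw [Finset.sum_filter]
        _ = ∑ i : Fin n, ∑ j : Fin n,
            (if i < j ∧ dist (chat i) (chat j) = 2 then 2 * L else 0) := by
            rw [Finset.sum_product]
        _ ≤ _ := Finset.sum_le_sum fun i _ => Finset.sum_le_sum fun j _ => hterm i j
    -- conclude
    have e1 := key c hcP
    have e2 := key chat hchatP
    set Tc := ∑ i : Fin n, ∑ j : Fin n,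
      (if i < j then volume (closedBall (c i) r ∩ closedBall (c j) r) else 0) with hTc
    set Th := ∑ i : Fin n, ∑ j : Fin n,
      (if i < j then volume (closedBall (chat i) r ∩ closedBall (chat j) r) else 0) with hTh
    have hfin : Th ≠ ⊤ := by
      have h1 : Th ≤ (n : ℝ≥0∞) * volume (closedBall (0 : EuclideanSpace ℝ (Fin d)) r) := by
        rw [← e2]; exact le_add_self
      have h2 : (n : ℝ≥0∞) * volume (closedBall (0 : EuclideanSpace ℝ (Fin d)) r) ≠ ⊤ :=
        ENNReal.mul_ne_top (ENNReal.natCast_ne_top n) measure_closedBall_lt_top.ne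
      exact fun h => h2 (top_le_iff.mp (h ▸ h1))
    have heq : volume (⋃ i : Fin n, closedBall (chat i) r) + Th
        = volume (⋃ i : Fin n, closedBall (c i) r) + Tc := by rw [e2, e1]
    have hTcTh : Tc ≤ Th := le_trans (hTle c hcP) hTge
    have hfinal : volume (⋃ i : Fin n, closedBall (chat i) r) + Th
        ≤ volume (⋃ i : Fin n, closedBall (c i) r) + Th := by
      rw [heq]
      exact add_le_add_right hTcTh _
    exact (ENNReal.add_le_add_iff_right hfin).mp hfinal
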